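/- Let G be an abelian group and H_1,...,H_t (t ≥ 2) distinct subgroups forming a t-star with kernel D (i.e., H_i ∩ H_j = D for all i ≠ j) with index [H_i : D] > 2 for each i. Then for each i, the subgroup generated by all differences x - y with x, y ∈ H_i \ D equals H_i. -/

import Mathlib

variable {G : Type*} [AddCommGroup G] [Fintype G]

/-- `N A i δ` counts the pairs `(a, b)` with `a ∈ A i`, `b ∈ A j` for some `j ≠ i`,
and `a - b = δ`. -/
noncomputable def bimodalCount {ι : Type*} (A : ι → Set G) (i : ι) (δ : G) : ℕ :=
  {p : G × G | p.1 ∈ A i ∧ (∃ j, j ≠ i ∧ p.2 ∈ A j) ∧ p.1 - p.2 = δ}.ncard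

/-- A collection of subsets has the bimodal property if every nonzero `δ` occurs as
an external difference out of `A i` either `0` or `|A i|` times. -/
def IsBimodal {ι : Type*} (A : ι → Set G) : Prop :=
  ∀ δ : G, δ ≠ 0 → ∀ i : ι,
    bimodalCount A i δ = 0 ∨ bimodalCount A i δ = (A i).ncard

/-- The internal difference group of a subset `X`: the subgroup generated by all
differences of elements of `X`. -/
def idg (X : Set G) : AddSubgroup G :=
  AddSubgroup.closure {d : G | ∃ x ∈ X, ∃ y ∈ X, x - y = d}


private lemma aux_exists_ne {α : Type*} [Finite α] (hcard : 2 < Nat.card α) (a b : α) :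
    ∃ c, c ≠ a ∧ c ≠ b := by
  by_contra h
  push_neg at h
  have hsub : (Set.univ : Set α) ⊆ {a, b} := by
    intro c _
    by_cases hc : c = a
    · exact Or.inl hc
    · exact Or.inr (h c hc)
  have h1 := Set.ncard_le_ncard hsub (Set.toFinite _)
  rw [Set.ncard_univ] at h1
  have h2 : ({a, b} : Set α).ncard ≤ 2 :=
    (Set.ncard_insert_le _ _).trans (by simp)
  omega

/-- For a `t`-star of distinct subgroups with kernel `D` and
`[H i : D] > 2`, the internal difference group of `H i \ D` is `H i`. -/
theorem star_idg_eq {t : ℕ} (ht : 2 ≤ t) (H : Fin t → AddSubgroup G)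
    (hinj : Function.Injective H) (D : AddSubgroup G)
    (hstar : ∀ i j, i ≠ j → H i ⊓ H j = D)
    (hindex : ∀ i, 2 < D.relIndex (H i)) :
    ∀ i, idg ((H i : Set G) \ (D : Set G)) = H i := by
  intro i
  have hnt : Nontrivial (Fin t) := by
    have : 1 < t := ht
    exact Fin.nontrivial_iff_two_le.mpr ht
  obtain ⟨j, hj⟩ := exists_ne i
  have hD : D ≤ H i := (hstar i j (Ne.symm hj)) ▸ inf_le_left
  set S : Set G := (H i : Set G) \ (D : Set G) with hSdef
  have gen : ∀ x ∈ S, ∀ y ∈ S, x - y ∈ idg S := fun x hx y hy =>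
    AddSubgroup.subset_closure ⟨x, hx, y, hy, rfl⟩
  have hcard : 2 < Nat.card ((H i) ⧸ D.addSubgroupOf (H i)) := hindex i
  have key : ∀ a : H i, ∃ z : H i, (z : G) ∉ D ∧ ((a : G) - (z : G)) ∉ D := by
    intro a
    obtain ⟨q, hq1, hq2⟩ := aux_exists_ne hcard (QuotientAddGroup.mk a) 0
    obtain ⟨z, rfl⟩ := QuotientAddGroup.mk_surjective q
    refine ⟨z, ?_, ?_⟩
    · intro hz
      exact hq2 ((QuotientAddGroup.eq_zero_iff z).mpr
        ((AddSubgroup.mem_addSubgroupOf).mpr hz))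
    · intro hxz
      apply hq1
      rw [QuotientAddGroup.eq]
      rw [AddSubgroup.mem_addSubgroupOf]
      have : ((-z + a : H i) : G) = -(z : G) + (a : G) := by push_cast; abel
      rw [this]
      have : -(z : G) + (a : G) = (a : G) - (z : G) := by abel
      rw [this]
      exact hxz
  obtain ⟨x0, hx0, -⟩ := key 0
  have hx0S : (x0 : G) ∈ S := ⟨x0.2, hx0⟩
  have hDsub : ∀ d ∈ D, d ∈ idg S := by
    intro d hd
    have hxd : (x0 : G) + d ∈ S := by
      refine ⟨(H i).add_mem x0.2 (hD hd), fun h => hx0 ?_⟩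
      have := D.sub_mem h hd
      simpa using this
    have := gen _ hxd _ hx0S
    simpa using this
  apply le_antisymm
  · apply (AddSubgroup.closure_le _).mpr
    rintro d ⟨x, hx, y, hy, rfl⟩
    exact (H i).sub_mem hx.1 hy.1
  · intro g hg
    by_cases hgD : g ∈ D
    · exact hDsub g hgD
    · obtain ⟨z, hz, hxz⟩ := key ⟨g, hg⟩
      have hzS : (z : G) ∈ S := ⟨z.2, hz⟩
      have hgS : g ∈ S := ⟨hg, hgD⟩
      have hdS : g - (z : G) ∈ S := ⟨(H i).sub_mem hg z.2, hxz⟩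
      have h1 : g - (z : G) ∈ idg S := gen g hgS _ hzS
      have h2 : g - (g - (z : G)) ∈ idg S := gen g hgS _ hdS
      have heq : g = (g - (z : G)) + (g - (g - (z : G))) := by abel
      rw [heq]
      exact (idg S).add_mem h1 h2
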